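/- Let n ≥ 2 and A = K[x]/(x^{n+1}) with maximal ideal m = (x). Let U be either span_K{x, x², …, x^{n−1}} (an H-pair of degree d = n) or, when n ≥ 3, span_K{x, x², …, x^{n−2}, x^n} (an H-pair of degree d = n−1). Then the boundary set B = {z ∈ m : z ≠ 0 and z^d ∈ U} equals m² \ {0}, and every element of B is U-equivalent to exactly one of the elements x², x³, …, x^n. In particular B has exactly n−1 U-equivalence classes, so the corresponding hypersurface has exactly n orbits under the induced additive action of U. -/

import Mathlib

/-- The exponential of an element of a finite-dimensional `K`-algebra:
`exp a = ∑_{i ≥ 0} a^i / i!`. -/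
noncomputable def expn (K : Type*) [Field K] {A : Type*} [CommRing A] [Algebra K A]
    (a : A) : A :=
  ∑ i ∈ Finset.range (Module.finrank K A + 1), ((i.factorial : K)⁻¹) • a ^ i

/-- The truncated polynomial algebra `K[x]/(x^{n+1})`. -/
abbrev TruncPoly (K : Type*) [Field K] (n : ℕ) : Type _ :=
  Polynomial K ⧸ Ideal.span {(Polynomial.X : Polynomial K) ^ (n + 1)}

/-- The image of `x` in `K[x]/(x^{n+1})`. -/
noncomputable abbrev truncX (K : Type*) [Field K] (n : ℕ) : TruncPoly K n :=
  Ideal.Quotient.mk (Ideal.span {(Polynomial.X : Polynomial K) ^ (n + 1)}) Polynomial.X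

set_option synthInstance.maxHeartbeats 1000000
set_option maxHeartbeats 2000000

namespace Stmt16

variable (K : Type*) [Field K] (n : ℕ)

noncomputable def pb : PowerBasis K (TruncPoly K n) :=
  AdjoinRoot.powerBasis (f := (Polynomial.X : Polynomial K) ^ (n+1))
    (pow_ne_zero _ Polynomial.X_ne_zero)

lemma pb_dim : (pb K n).dim = n + 1 := by simp [pb]

noncomputable def tb : Module.Basis (Fin (n+1)) K (TruncPoly K n) :=
  (pb K n).basis.reindex (finCongr (pb_dim K n))

lemma tb_eq (i : Fin (n+1)) : tb K n i = truncX K n ^ (i : ℕ) := by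
  rw [tb, Module.Basis.reindex_apply, (pb K n).basis_eq_pow]
  have : (pb K n).gen = truncX K n := AdjoinRoot.powerBasis_gen _
  rw [this]
  rfl

lemma finrank_eq : Module.finrank K (TruncPoly K n) = n + 1 := by
  rw [(pb K n).finrank, pb_dim]

/-- coordinate functional (junk value 0 for `i > n`). -/
noncomputable def co (i : ℕ) : TruncPoly K n →ₗ[K] K :=
  if h : i < n + 1 then (tb K n).coord ⟨i, h⟩ else 0

lemma xpow_eq_zero {m : ℕ} (h : n + 1 ≤ m) : truncX K n ^ m = 0 := by
  rw [← map_pow, Ideal.Quotient.eq_zero_iff_mem]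
  exact Ideal.mem_span_singleton.mpr (pow_dvd_pow _ h)

lemma co_pow (i j : ℕ) (hj : j ≤ n) :
    co K n i (truncX K n ^ j) = if i = j then 1 else 0 := by
  rw [co]
  by_cases h : i < n + 1
  · rw [dif_pos h, ← tb_eq K n ⟨j, by omega⟩, Module.Basis.coord_apply, Module.Basis.repr_self,
      Finsupp.single_apply]
    simp only [Fin.mk.injEq]
    by_cases hij : i = j
    · rw [if_pos hij.symm, if_pos hij]
    · rw [if_neg (Ne.symm hij), if_neg hij]
  · rw [dif_neg h, if_neg (by omega)]; rfl

lemma sum_co (z : TruncPoly K n) :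
    ∑ i ∈ Finset.range (n+1), co K n i z • truncX K n ^ i = z := by
  rw [← Fin.sum_univ_eq_sum_range (fun i => co K n i z • truncX K n ^ i)]
  have : ∀ i : Fin (n+1), co K n (i : ℕ) z • truncX K n ^ (i : ℕ)
      = (tb K n).repr z i • tb K n i := by
    intro i
    rw [co, dif_pos i.isLt, Module.Basis.coord_apply, tb_eq]
  rw [Finset.sum_congr rfl (fun i _ => this i)]
  exact (tb K n).sum_repr z

lemma eq_zero_of_co {z : TruncPoly K n} (h : ∀ i, co K n i z = 0) : z = 0 := by
  rw [← sum_co K n z]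
  simp [h]

lemma ksmul_mem {J : Ideal (TruncPoly K n)} (c : K) {y : TruncPoly K n}
    (hy : y ∈ J) : c • y ∈ J := J.smul_of_tower_mem c hy

/-- Membership in the ideal `(x^k)` is equivalent to vanishing of low coordinates. -/
lemma mem_span_xpow (k : ℕ) (z : TruncPoly K n) :
    z ∈ Ideal.span {truncX K n ^ k} ↔ ∀ i, i < k → co K n i z = 0 := by
  constructor
  · intro hz i hik
    obtain ⟨w, hw⟩ := Ideal.mem_span_singleton.mp hz
    have hzw : z = ∑ j ∈ Finset.range (n+1),
        co K n j w • truncX K n ^ (k + j) := by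
      rw [hw]
      nth_rewrite 1 [← sum_co K n w]
      rw [Finset.mul_sum]
      exact Finset.sum_congr rfl fun j _ => by rw [mul_smul_comm]; norm_num [pow_add]
    rw [hzw, map_sum]
    refine Finset.sum_eq_zero fun j _ => ?_
    rw [map_smul]
    by_cases hkj : k + j ≤ n
    · rw [co_pow K n i _ hkj, if_neg (by omega), smul_zero]
    · rw [xpow_eq_zero K n (by omega), map_zero, smul_zero]
  · intro h
    rw [← sum_co K n z]
    refine Submodule.sum_mem _ fun i hi => ?_
    by_cases hik : i < k
    · rw [h i hik, zero_smul]; exact zero_mem _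
    · exact ksmul_mem K n _ (Ideal.mem_span_singleton.mpr (pow_dvd_pow _ (by omega)))

lemma mem_span_image_iff {S : Set ℕ} (hS : ∀ j ∈ S, j ≤ n) (z : TruncPoly K n) :
    z ∈ Submodule.span K ((fun j : ℕ => truncX K n ^ j) '' S) ↔
      ∀ i, i ≤ n → i ∉ S → co K n i z = 0 := by
  constructor
  · intro hz
    induction hz using Submodule.span_induction with
    | mem y hy =>
      obtain ⟨j, hjS, rfl⟩ := hy
      intro i hi hiS
      rw [co_pow K n i j (hS j hjS), if_neg (fun h : i = j => hiS (by rw [h]; exact hjS))]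
    | zero => intro i _ _; rw [map_zero]
    | add y w _ _ hy hw => intro i hi hiS; rw [map_add, hy i hi hiS, hw i hi hiS, add_zero]
    | smul c y _ hy => intro i hi hiS; rw [map_smul, hy i hi hiS, smul_zero]
  · intro h
    rw [← sum_co K n z]
    refine Submodule.sum_mem _ fun i hi => ?_
    by_cases hiS : i ∈ S
    · exact Submodule.smul_mem (Submodule.span K ((fun j : ℕ => truncX K n ^ j) '' S)) _
        (Submodule.subset_span ⟨i, hiS, rfl⟩)
    · rw [h i (by simpa using Nat.lt_succ_iff.mp (Finset.mem_range.mp hi)) hiS, zero_smul]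
      exact zero_mem _

lemma span_image_le_ideal {S : Set ℕ} (hS : ∀ j ∈ S, 1 ≤ j) {z : TruncPoly K n}
    (hz : z ∈ Submodule.span K ((fun j : ℕ => truncX K n ^ j) '' S)) :
    z ∈ Ideal.span {truncX K n} := by
  have : Submodule.span K ((fun j : ℕ => truncX K n ^ j) '' S) ≤
      Submodule.restrictScalars K (Ideal.span {truncX K n}) := by
    rw [Submodule.span_le]
    rintro _ ⟨j, hjS, rfl⟩
    show truncX K n ^ j ∈ Ideal.span {truncX K n}
    exact Ideal.mem_span_singleton.mpr (dvd_pow_self _ (by have := hS j hjS; omega))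
  exact this hz

/-- Binomial estimate: `(a+b)^i - a^i ∈ (b) * I^(i-1)` for `a, b ∈ I`. -/
lemma pow_sub_pow_mem {A : Type*} [CommRing A] (I : Ideal A) {a b : A}
    (ha : a ∈ I) (hb : b ∈ I) :
    ∀ i : ℕ, 1 ≤ i → (a + b) ^ i - a ^ i ∈ Ideal.span {b} * I ^ (i - 1) := by
  intro i hi
  induction i with
  | zero => omega
  | succ i ih =>
    by_cases hi1 : 1 ≤ i
    · have key : (a + b) ^ (i + 1) - a ^ (i + 1)
          = (a + b) * ((a + b) ^ i - a ^ i) + b * a ^ i := by ring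
      rw [key]
      have h1 : (a + b) * ((a + b) ^ i - a ^ i) ∈ Ideal.span {b} * I ^ i := by
        have := Ideal.mul_mem_mul (I.add_mem ha hb) (ih hi1)
        have heq : I * (Ideal.span {b} * I ^ (i - 1)) = Ideal.span {b} * I ^ i := by
          rw [mul_comm I, mul_assoc, ← pow_succ, Nat.sub_add_cancel hi1]
        rw [heq] at this
        simpa using this
      have h2 : b * a ^ i ∈ Ideal.span {b} * I ^ i :=
        Ideal.mul_mem_mul (Ideal.mem_span_singleton_self b) (Ideal.pow_mem_pow ha i)
      simpa using (Ideal.add_mem _ h1 h2)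
    · have hi0 : i = 0 := by omega
      subst hi0
      simpa [Ideal.mul_top] using Ideal.mem_span_singleton_self b

lemma expn_zero : expn K (0 : TruncPoly K n) = 1 := by
  rw [expn]
  rw [Finset.sum_eq_single 0]
  · norm_num
  · intro i _ hi
    rw [zero_pow hi, smul_zero]
  · intro h
    exact absurd (Finset.mem_range.mpr (by omega)) h

lemma expn_sub_one_mem {u : TruncPoly K n} (hu : u ∈ Ideal.span {truncX K n}) :
    expn K u - 1 ∈ Ideal.span {truncX K n} := by
  rw [expn]
  have hsplit : Finset.range (Module.finrank K (TruncPoly K n) + 1)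
      = Finset.Ico 0 1 ∪ Finset.Ico 1 (Module.finrank K (TruncPoly K n) + 1) := by
    rw [Finset.range_eq_Ico, ← Finset.Ico_union_Ico_eq_Ico (Nat.zero_le 1)
      (by omega : 1 ≤ Module.finrank K (TruncPoly K n) + 1)]
  rw [hsplit, Finset.sum_union (Finset.Ico_disjoint_Ico_consecutive 0 1 _)]
  have h0 : ∑ i ∈ Finset.Ico 0 1, ((i.factorial : K)⁻¹) • u ^ i = 1 := by norm_num
  rw [h0, add_sub_cancel_left]
  refine Submodule.sum_mem _ fun i hi => ?_
  refine ksmul_mem K n _ ?_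
  exact Ideal.pow_mem_of_mem _ hu i (by simp at hi; omega)

lemma expn_add_sub {u v : TruncPoly K n} (hu : u ∈ Ideal.span {truncX K n})
    (hv : v ∈ Ideal.span {truncX K n}) :
    expn K (u + v) - expn K u - v ∈ Ideal.span {v} * Ideal.span {truncX K n} := by
  set N := Module.finrank K (TruncPoly K n) with hN
  have hN1 : 1 ≤ N := by rw [hN, finrank_eq]; omega
  have hdiff : expn K (u + v) - expn K u
      = ∑ i ∈ Finset.range (N + 1), ((i.factorial : K)⁻¹) • ((u + v) ^ i - u ^ i) := by
    rw [expn, expn, ← Finset.sum_sub_distrib]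
    exact Finset.sum_congr rfl fun i _ => (smul_sub _ _ _).symm
  have hsplit : Finset.range (N + 1)
      = Finset.Ico 0 2 ∪ Finset.Ico 2 (N + 1) := by
    rw [Finset.range_eq_Ico, ← Finset.Ico_union_Ico_eq_Ico (Nat.zero_le 2)
      (by omega : 2 ≤ N + 1)]
  rw [hdiff, hsplit, Finset.sum_union (Finset.Ico_disjoint_Ico_consecutive 0 2 _)]
  have h01 : ∑ i ∈ Finset.Ico 0 2, ((i.factorial : K)⁻¹) • ((u + v) ^ i - u ^ i) = v := by
    rw [show Finset.Ico 0 2 = {0, 1} by rfl]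
    norm_num [Nat.factorial]
  rw [h01]
  have hcollapse : v + ∑ i ∈ Finset.Ico 2 (N + 1), ((i.factorial : K)⁻¹) • ((u + v) ^ i - u ^ i) - v
      = ∑ i ∈ Finset.Ico 2 (N + 1), ((i.factorial : K)⁻¹) • ((u + v) ^ i - u ^ i) := by ring
  rw [hcollapse]
  refine Submodule.sum_mem _ fun i hi => ?_
  refine ksmul_mem K n _ ?_
  have hi2 : 2 ≤ i := (Finset.mem_Ico.mp hi).1
  have hmem := pow_sub_pow_mem (Ideal.span {truncX K n}) hu hv i (by omega)
  refine Ideal.mul_mono_right ?_ hmem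
  exact Ideal.pow_le_self (by omega)

/-- Inductive construction: for `a ∈ (x)` there is `u ∈ span{x, …, x^m}` with
`exp(u)(1+a) ≡ 1 mod (x^{m+1})`. -/
lemma exists_u {a : TruncPoly K n} (ha : a ∈ Ideal.span {truncX K n}) (m : ℕ) :
    ∃ u ∈ Submodule.span K ((fun j : ℕ => truncX K n ^ j) '' {j : ℕ | 1 ≤ j ∧ j ≤ m}),
      expn K u * (1 + a) - 1 ∈ Ideal.span {truncX K n ^ (m + 1)} := by
  induction m with
  | zero =>
    refine ⟨0, zero_mem _, ?_⟩
    rw [expn_zero, one_mul, add_sub_cancel_left, pow_one]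
    exact ha
  | succ m ih =>
    obtain ⟨u, huspan, he⟩ := ih
    have humem : u ∈ Ideal.span {truncX K n} :=
      span_image_le_ideal K n (fun j hj => hj.1) huspan
    obtain ⟨s, hs⟩ := Ideal.mem_span_singleton.mp he
    set ε : K := co K n 0 s with hε
    set v : TruncPoly K n := -(ε • truncX K n ^ (m + 1)) with hv
    have hvspan : v ∈ Submodule.span K
        ((fun j : ℕ => truncX K n ^ j) '' {j : ℕ | 1 ≤ j ∧ j ≤ m + 1}) := by
      refine neg_mem (Submodule.smul_mem _ _ (Submodule.subset_span ?_))
      exact ⟨m + 1, ⟨by omega, le_refl _⟩, rfl⟩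
    have hxm1 : truncX K n ^ (m + 1) ∈ Ideal.span {truncX K n} :=
      Ideal.mem_span_singleton.mpr (dvd_pow_self _ (by omega))
    have hvmem : v ∈ Ideal.span {truncX K n} := neg_mem (ksmul_mem K n _ hxm1)
    have hvmem' : v ∈ Ideal.span {truncX K n ^ (m + 1)} :=
      neg_mem (ksmul_mem K n _ (Ideal.mem_span_singleton_self _))
    refine ⟨u + v, ?_, ?_⟩
    · refine add_mem ?_ hvspan
      refine Submodule.span_mono (Set.image_mono ?_) huspan
      intro j hj
      exact ⟨hj.1, Nat.le_succ_of_le hj.2⟩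
    · -- the main computation
      have hr := expn_add_sub K n humem hvmem
      set r : TruncPoly K n := expn K (u + v) - expn K u - v with hrdef
      have key : expn K (u + v) * (1 + a) - 1
          = (truncX K n ^ (m + 1) * (s - ε • 1)) + v * a + r * (1 + a) := by
        have h1 : truncX K n ^ (m + 1) * (s - ε • 1)
            = (expn K u * (1 + a) - 1) + v := by
          rw [mul_sub, ← hs, mul_smul_comm, mul_one, hv]
          ring
        rw [h1, hrdef]
        ring
      rw [key]
      have hprod : Ideal.span {truncX K n ^ (m + 1)} * Ideal.span {truncX K n}
          = Ideal.span {truncX K n ^ (m + 1 + 1)} := by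
        rw [Ideal.span_singleton_mul_span_singleton, ← pow_succ]
      have t1 : truncX K n ^ (m + 1) * (s - ε • 1)
          ∈ Ideal.span {truncX K n ^ (m + 1 + 1)} := by
        rw [← hprod]
        refine Ideal.mul_mem_mul (Ideal.mem_span_singleton_self _) ?_
        rw [← pow_one (truncX K n), mem_span_xpow]
        intro i hi
        have hi0 : i = 0 := by omega
        subst hi0
        rw [map_sub, map_smul]
        have hone : co K n 0 (1 : TruncPoly K n) = 1 := by
          have := co_pow K n 0 0 (by omega)
          simpa using this
        rw [hone, smul_eq_mul, mul_one, hε, sub_self]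
      have t2 : v * a ∈ Ideal.span {truncX K n ^ (m + 1 + 1)} := by
        rw [← hprod]
        exact Ideal.mul_mem_mul hvmem' ha
      have t3 : r * (1 + a) ∈ Ideal.span {truncX K n ^ (m + 1 + 1)} := by
        refine Ideal.mul_mem_right _ _ ?_
        rw [← hprod]
        refine (Ideal.mul_mono_left ?_) hr
        rw [Ideal.span_le, Set.singleton_subset_iff]
        exact hvmem'
      exact add_mem (add_mem t1 t2) t3

lemma mem_span_x_iff (z : TruncPoly K n) :
    z ∈ Ideal.span {truncX K n} ↔ ∀ i, i < 1 → co K n i z = 0 := by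
  have := mem_span_xpow K n 1 z
  rwa [pow_one] at this

lemma mem_sq_iff (z : TruncPoly K n) :
    z ∈ Ideal.span {truncX K n} ^ 2 ↔ (co K n 0 z = 0 ∧ co K n 1 z = 0) := by
  rw [Ideal.span_singleton_pow, mem_span_xpow]
  constructor
  · intro h
    exact ⟨h 0 (by omega), h 1 (by omega)⟩
  · rintro ⟨h0, h1⟩ i hi
    interval_cases i <;> assumption

end Stmt16


open Stmt16

set_option synthInstance.maxHeartbeats 1000000 in
set_option maxHeartbeats 2000000 in
/-- Let `n ≥ 2` and `A = K[x]/(x^{n+1})` with maximal ideal `m = (x)`.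
Let `U` be either `span{x, x², …, x^{n−1}}` (an `H`-pair of degree `d = n`) or, when
`n ≥ 3`, `span{x, x², …, x^{n−2}, x^n}` (an `H`-pair of degree `d = n−1`).  Then the
boundary set `B = {z ∈ m : z ≠ 0, z^d ∈ U}` equals `m² \ {0}`, and every element of `B`
is `U`-equivalent to exactly one of the elements `x², x³, …, x^n`.  In particular `B` has
exactly `n−1` `U`-equivalence classes. -/
theorem stmt_16 (K : Type*) [Field K] [IsAlgClosed K] [CharZero K]
    (n : ℕ) (hn : 2 ≤ n)
    (U : Submodule K (TruncPoly K n)) (d : ℕ)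
    (hcase :
      (U = Submodule.span K
          ((fun j : ℕ => truncX K n ^ j) '' {j : ℕ | 1 ≤ j ∧ j ≤ n - 1}) ∧ d = n) ∨
      (3 ≤ n ∧ U = Submodule.span K
          ((fun j : ℕ => truncX K n ^ j) '' ({j : ℕ | 1 ≤ j ∧ j ≤ n - 2} ∪ {n}))
        ∧ d = n - 1)) :
    {z : TruncPoly K n | z ∈ Ideal.span {truncX K n} ∧ z ≠ 0 ∧ z ^ d ∈ U}
      = {z : TruncPoly K n | z ∈ Ideal.span {truncX K n} ^ 2 ∧ z ≠ 0} ∧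
    ∀ z : TruncPoly K n, z ∈ Ideal.span {truncX K n} → z ≠ 0 → z ^ d ∈ U →
      ∃! w : TruncPoly K n,
        w ∈ ((fun j : ℕ => truncX K n ^ j) '' {j : ℕ | 2 ≤ j ∧ j ≤ n}) ∧
        ∃ u ∈ U, ∃ lam : K, lam ≠ 0 ∧ expn K u * z = lam • w := by
  classical
  -- common facts extracted from the two cases
  have hd2 : 2 ≤ d := by rcases hcase with ⟨_, hd⟩ | ⟨h3, _, hd⟩ <;> omega
  have hdn : d ≤ n := by rcases hcase with ⟨_, hd⟩ | ⟨h3, _, hd⟩ <;> omega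
  have h2d : n + 1 ≤ 2 * d := by rcases hcase with ⟨_, hd⟩ | ⟨h3, _, hd⟩ <;> omega
  have hUI : ∀ y ∈ U, y ∈ Ideal.span {truncX K n} := by
    rcases hcase with ⟨hU, _⟩ | ⟨h3, hU, _⟩ <;> intro y hy <;> rw [hU] at hy
    · exact span_image_le_ideal K n (fun j hj => hj.1) hy
    · refine span_image_le_ideal K n (fun j hj => ?_) hy
      rcases hj with hj | hj
      · exact hj.1
      · have : j = n := hj
        omega
  have hUco : ∀ y ∈ U, co K n d y = 0 := by
    rcases hcase with ⟨hU, hd⟩ | ⟨h3, hU, hd⟩ <;> intro y hy <;> rw [hU] at hy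
    · refine (mem_span_image_iff K n (fun j hj => by have := hj.2; omega) y).mp hy d (by omega) ?_
      intro hmem
      simp only [Set.mem_setOf_eq] at hmem
      omega
    · refine (mem_span_image_iff K n (fun j hj => ?_) y).mp hy d (by omega) ?_
      · rcases hj with hj | hj
        · simp only [Set.mem_setOf_eq] at hj; omega
        · have : j = n := hj; omega
      · intro hmem
        rcases hmem with hj | hj
        · simp only [Set.mem_setOf_eq] at hj; omega
        · have : d = n := hj; omega
  -- the main dichotomy (part 1 as an iff)
  have hmain : ∀ z : TruncPoly K n,
      (z ∈ Ideal.span {truncX K n} ∧ z ≠ 0 ∧ z ^ d ∈ U) ↔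
      (z ∈ Ideal.span {truncX K n} ^ 2 ∧ z ≠ 0) := by
    intro z
    constructor
    · rintro ⟨hz1, hz0, hzd⟩
      refine ⟨?_, hz0⟩
      have hc0 : co K n 0 z = 0 := (mem_span_x_iff K n z).mp hz1 0 (by omega)
      have hc1 : co K n 1 z = 0 := by
        by_contra hc1
        set lam : K := co K n 1 z with hlam
        set y : TruncPoly K n := z - lam • truncX K n with hy
        have hax : lam • truncX K n ∈ Ideal.span {truncX K n} :=
          ksmul_mem K n _ (Ideal.mem_span_singleton_self _)
        have hy2 : y ∈ Ideal.span {truncX K n ^ 2} := by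
          rw [mem_span_xpow]
          intro i hi
          have hcox : ∀ i', co K n i' (truncX K n) = if i' = 1 then 1 else 0 := by
            intro i'
            have := co_pow K n i' 1 (by omega)
            rwa [pow_one] at this
          interval_cases i <;>
            simp only [hy, map_sub, map_smul, hcox, smul_eq_mul] <;> norm_num
          exact hc0
          exact sub_eq_zero.mpr hlam.symm
        have hyI : y ∈ Ideal.span {truncX K n} := by
          rw [mem_span_x_iff]
          intro i hi
          have := (mem_span_xpow K n 2 y).mp hy2
          exact this i (by omega)
        have hzdec : z = lam • truncX K n + y := by rw [hy]; ring
        have hbin := pow_sub_pow_mem (Ideal.span {truncX K n}) hax hyI d (by omega)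
        rw [← hzdec] at hbin
        have hle : Ideal.span {y} * Ideal.span {truncX K n} ^ (d - 1)
            ≤ Ideal.span {truncX K n ^ (d + 1)} := by
          have h1 : Ideal.span {y} ≤ Ideal.span {truncX K n ^ 2} := by
            rw [Ideal.span_le, Set.singleton_subset_iff]; exact hy2
          have h2 : Ideal.span {truncX K n} ^ (d - 1) = Ideal.span {truncX K n ^ (d-1)} :=
            Ideal.span_singleton_pow _ _
          calc Ideal.span {y} * Ideal.span {truncX K n} ^ (d - 1)
              ≤ Ideal.span {truncX K n ^ 2} * Ideal.span {truncX K n} ^ (d - 1) :=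
                Ideal.mul_mono_left h1
            _ = Ideal.span {truncX K n ^ (d + 1)} := by
                rw [h2, Ideal.span_singleton_mul_span_singleton, ← pow_add,
                  show 2 + (d - 1) = d + 1 by omega]
        have hdiffmem : z ^ d - (lam • truncX K n) ^ d ∈ Ideal.span {truncX K n ^ (d+1)} :=
          hle hbin
        have hco_diff : co K n d (z ^ d - (lam • truncX K n) ^ d) = 0 :=
          (mem_span_xpow K n (d+1) _).mp hdiffmem d (by omega)
        have hco_pow : co K n d ((lam • truncX K n) ^ d) = lam ^ d := by
          rw [smul_pow, map_smul, co_pow K n d d hdn, if_pos rfl, smul_eq_mul, mul_one]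
        have hzdval : co K n d (z ^ d) = lam ^ d := by
          have h := map_sub (co K n d) (z ^ d) ((lam • truncX K n) ^ d)
          rw [hco_diff, hco_pow] at h
          exact sub_eq_zero.mp h.symm
        rw [hUco _ hzd] at hzdval
        exact pow_ne_zero d hc1 hzdval.symm
      exact (mem_sq_iff K n z).mpr ⟨hc0, hc1⟩
    · rintro ⟨hz2, hz0⟩
      have hz1 : z ∈ Ideal.span {truncX K n} := Ideal.pow_le_self (by omega) hz2
      refine ⟨hz1, hz0, ?_⟩
      have hzd : z ^ d ∈ (Ideal.span {truncX K n} ^ 2) ^ d := Ideal.pow_mem_pow hz2 d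
      rw [← pow_mul, Ideal.span_singleton_pow, xpow_eq_zero K n h2d] at hzd
      have : z ^ d = 0 := by
        rwa [Ideal.span_singleton_eq_bot.mpr rfl, Ideal.mem_bot] at hzd
      rw [this]
      exact zero_mem U
  constructor
  · ext z
    simp only [Set.mem_setOf_eq]
    exact hmain z
  · intro z hzI hz0 hzU
    have hz2 := ((hmain z).mp ⟨hzI, hz0, hzU⟩).1
    obtain ⟨hc0, hc1⟩ := (mem_sq_iff K n z).mp hz2
    have hex : ∃ i, co K n i z ≠ 0 := by
      by_contra h
      push_neg at h
      exact hz0 (eq_zero_of_co K n h)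
    set k := Nat.find hex with hkdef
    have hk : co K n k z ≠ 0 := Nat.find_spec hex
    have hmin : ∀ i, i < k → co K n i z = 0 := fun i hi => by
      have := Nat.find_min hex hi
      simpa using this
    have hk2 : 2 ≤ k := by
      rcases Nat.lt_or_ge k 2 with h | h
      · interval_cases k
        · exact absurd hc0 hk
        · exact absurd hc1 hk
      · exact h
    have hkn : k ≤ n := by
      by_contra h
      apply hk
      rw [co, dif_neg (by omega)]
      rfl
    set lam : K := co K n k z with hlam
    have hrem : z - lam • truncX K n ^ k ∈ Ideal.span {truncX K n ^ (k+1)} := by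
      rw [mem_span_xpow]
      intro i hi
      rw [map_sub, map_smul, co_pow K n i k hkn, smul_eq_mul]
      by_cases hik : i = k
      · subst hik
        rw [if_pos rfl, mul_one, sub_self]
      · rw [if_neg hik, mul_zero, sub_zero]
        exact hmin i (by omega)
    obtain ⟨t, ht⟩ := Ideal.mem_span_singleton.mp hrem
    set a : TruncPoly K n := lam⁻¹ • (truncX K n * t) with ha_def
    have ha : a ∈ Ideal.span {truncX K n} :=
      ksmul_mem K n _ (Ideal.mul_mem_right t _ (Ideal.mem_span_singleton_self _))
    have hz_eq : z = lam • (truncX K n ^ k * (1 + a)) := by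
      have h1 : truncX K n ^ k * (1 + a)
          = truncX K n ^ k + lam⁻¹ • (truncX K n ^ (k+1) * t) := by
        rw [ha_def, mul_add, mul_one, mul_smul_comm]
        congr 2
        ring
      rw [h1, smul_add, smul_smul, mul_inv_cancel₀ hk, one_smul, ← ht]
      ring
    obtain ⟨u, huspan, hg⟩ := exists_u K n ha (n - k)
    obtain ⟨h, hh⟩ := Ideal.mem_span_singleton.mp hg
    have hx0 : truncX K n ^ k * (truncX K n ^ (n - k + 1) * h) = 0 := by
      rw [← mul_assoc, ← pow_add, show k + (n - k + 1) = n + 1 by omega,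
        xpow_eq_zero K n le_rfl, zero_mul]
    have heq : expn K u * z = lam • truncX K n ^ k := by
      rw [hz_eq, mul_smul_comm]
      congr 1
      have hexp1 : expn K u * (1 + a) = 1 + truncX K n ^ (n - k + 1) * h := by
        rw [← hh]; ring
      calc expn K u * (truncX K n ^ k * (1 + a))
          = truncX K n ^ k * (expn K u * (1 + a)) := by ring
        _ = truncX K n ^ k * (1 + truncX K n ^ (n - k + 1) * h) := by rw [hexp1]
        _ = truncX K n ^ k + truncX K n ^ k * (truncX K n ^ (n - k + 1) * h) := by ring
        _ = truncX K n ^ k := by rw [hx0, add_zero]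
    have huU : u ∈ U := by
      rcases hcase with ⟨hU, hd⟩ | ⟨h3, hU, hd⟩ <;> rw [hU]
      · refine Submodule.span_mono (Set.image_mono ?_) huspan
        intro j hj
        obtain ⟨hj1, hj2⟩ := hj
        exact ⟨hj1, by omega⟩
      · refine Submodule.span_mono (Set.image_mono ?_) huspan
        intro j hj
        obtain ⟨hj1, hj2⟩ := hj
        exact Or.inl ⟨hj1, by omega⟩
    refine ⟨truncX K n ^ k, ⟨⟨k, ⟨hk2, hkn⟩, rfl⟩, u, huU, lam, hk, heq⟩, ?_⟩
    rintro w' ⟨⟨j, ⟨hj2, hjn⟩, rfl⟩, u', hu'U, lam', hlam', heq'⟩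
    have hu'I : u' ∈ Ideal.span {truncX K n} := hUI u' hu'U
    have hzk : z ∈ Ideal.span {truncX K n ^ k} := by
      rw [mem_span_xpow]; exact hmin
    have h6 : (expn K u' - 1) * z ∈ Ideal.span {truncX K n ^ (k+1)} := by
      have := Ideal.mul_mem_mul (expn_sub_one_mem K n hu'I) hzk
      rwa [Ideal.span_singleton_mul_span_singleton, ← pow_succ'] at this
    have hsplit : expn K u' * z = z + (expn K u' - 1) * z := by ring
    have hco : co K n k (lam' • truncX K n ^ j) = lam := by
      rw [← heq', hsplit, map_add,
        (mem_span_xpow K n (k+1) _).mp h6 k (by omega), add_zero, hlam]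
    have hkj : j = k := by
      by_contra hjk
      rw [map_smul, co_pow K n k j hjn, if_neg (fun h => hjk h.symm), smul_zero] at hco
      exact hk hco.symm
    rw [hkj]
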